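/- Fix n ≥ 2, let G be a graph, ω a placement function on G, and f : V(G) → V(C) satisfying (C1) and (C2). Suppose C(ℓ,j) with j ≥ 2 is a start-type reversal point: there exist wrapping patterns u_0,…,u_{k₁} and v_0,…,v_{k₂} in G with f(u_0) = f(v_0) = C(ℓ,j), f(u_1) = C(ℓ,j−1), and f(v_1) = C(ℓ,j+1). Then for any wrapping pattern w_0,…,w_k in G and any p ∈ {0,…,k}, if f(w_p) = C(ℓ,j) then p = 0. -/

import Mathlib

/-- Vertices of the infinite n-od graph `C`: a branch vertex, and nodes `C(ℓ,j)`
(intended for `1 ≤ ℓ ≤ n`, `j ≥ 1`). -/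
inductive NOdVert : Type where
  | branch : NOdVert
  | node : ℕ → ℕ → NOdVert
deriving DecidableEq

/-- `cv ℓ j` denotes the vertex `C(ℓ,j)`, where `C(ℓ,0)` is the branch vertex. -/
def cv (ℓ j : ℕ) : NOdVert := if j = 0 then NOdVert.branch else NOdVert.node ℓ j

/-- Adjacency in the infinite n-od `C`: `C(ℓ,j)` is adjacent to `C(ℓ,j+1)` for
`1 ≤ ℓ ≤ n` and `j ≥ 0` (the case `j = 0` gives branch–`C(ℓ,1)` edges). -/
def nodAdj (n : ℕ) (u v : NOdVert) : Prop :=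
  ∃ ℓ j, 1 ≤ ℓ ∧ ℓ ≤ n ∧
    ((u = cv ℓ j ∧ v = cv ℓ (j + 1)) ∨ (v = cv ℓ j ∧ u = cv ℓ (j + 1)))

/-- The point `b(i,t) = ((1+t)cos(iπ/n), (1+t)sin(iπ/n))` in the plane. -/
noncomputable def bpt (n i : ℕ) (t : ℝ) : ℝ × ℝ :=
  ((1 + t) * Real.cos (i * Real.pi / n), (1 + t) * Real.sin (i * Real.pi / n))

/-- The origin `o` of the plane. -/
def origin : ℝ × ℝ := (0, 0)

/-- A placement function: on each edge of `G`, one endpoint maps to `o` and the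
other to some `b(i,t)` with `i ∈ {0,…,n}`, `t ∈ [0,1]`. -/
def IsPlacement {V : Type*} (n : ℕ) (G : SimpleGraph V) (ω : V → ℝ × ℝ) : Prop :=
  ∀ u v, G.Adj u v →
    (ω u = origin ∧ ∃ i ≤ n, ∃ t ∈ Set.Icc (0 : ℝ) 1, ω v = bpt n i t) ∨
    (ω v = origin ∧ ∃ i ≤ n, ∃ t ∈ Set.Icc (0 : ℝ) 1, ω u = bpt n i t)

/-- Condition (C1). -/
def CondC1 {V : Type*} (n : ℕ) (ω : V → ℝ × ℝ) (f : V → NOdVert) : Prop :=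
  ∀ u v, f u = f v →
    (ω u = origin ∧ ω v = origin) ∨
    ∃ i ≤ n, ∃ s ∈ Set.Icc (0 : ℝ) 1, ∃ t ∈ Set.Icc (0 : ℝ) 1,
      ω u = bpt n i s ∧ ω v = bpt n i t

/-- Condition (C2): `f` maps adjacent vertices of `G` to adjacent vertices of `C`. -/
def CondC2 {V : Type*} (n : ℕ) (G : SimpleGraph V) (f : V → NOdVert) : Prop :=
  ∀ u v, G.Adj u v → nodAdj n (f u) (f v)

/-- `w 0, …, w k` is a wrapping pattern in `G` for the placement function `ω`. -/
def IsWrapping {V : Type*} (n : ℕ) (G : SimpleGraph V) (ω : V → ℝ × ℝ)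
    (w : ℕ → V) (k : ℕ) : Prop :=
  0 < k ∧ 2 * (n + 1) ∣ k ∧
  (∀ p < k, G.Adj (w p) (w (p + 1))) ∧
  (∀ q, 2 * q ≤ k → ∃ t ∈ Set.Icc (0 : ℝ) 1, ω (w (2 * q)) = bpt n (q % (n + 1)) t) ∧
  (∀ q, 2 * q + 1 ≤ k → ω (w (2 * q + 1)) = origin)

/-- The branch-star of `C`: the branch vertex together with `C(ℓ,1)`, `1 ≤ ℓ ≤ n`. -/
def branchStar (n : ℕ) : Set NOdVert :=
  {NOdVert.branch} ∪ {x | ∃ ℓ, 1 ≤ ℓ ∧ ℓ ≤ n ∧ x = NOdVert.node ℓ 1}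

lemma bpt_ne_origin {n i : ℕ} {t : ℝ} (ht : 0 ≤ t) : bpt n i t ≠ origin := by
  intro h
  have h1 : (1 + t) * Real.cos (i * Real.pi / n) = 0 := congrArg Prod.fst h
  have h2 : (1 + t) * Real.sin (i * Real.pi / n) = 0 := congrArg Prod.snd h
  have hpos : (0:ℝ) < 1 + t := by linarith
  have hc : Real.cos (i * Real.pi / n) = 0 := by
    rcases mul_eq_zero.mp h1 with h | h
    · linarith
    · exact h
  have hs : Real.sin (i * Real.pi / n) = 0 := by
    rcases mul_eq_zero.mp h2 with h | h
    · linarith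
    · exact h
  have := Real.sin_sq_add_cos_sq (i * Real.pi / n)
  rw [hs, hc] at this
  norm_num at this

lemma bpt_inj {n i i' : ℕ} {s t : ℝ} (hn : 1 ≤ n) (hi : i ≤ n) (hi' : i' ≤ n)
    (hs : 0 ≤ s) (ht : 0 ≤ t) (h : bpt n i s = bpt n i' t) : i = i' := by
  set θ := (i : ℝ) * Real.pi / n with hθ
  set θ' := (i' : ℝ) * Real.pi / n with hθ'
  have h1 : (1 + s) * Real.cos θ = (1 + t) * Real.cos θ' := congrArg Prod.fst h
  have h2 : (1 + s) * Real.sin θ = (1 + t) * Real.sin θ' := congrArg Prod.snd h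
  have hps : (0:ℝ) < 1 + s := by linarith
  have hpt : (0:ℝ) < 1 + t := by linarith
  have e1 : ((1+s) * Real.cos θ)^2 + ((1+s) * Real.sin θ)^2 = (1+s)^2 := by
    have := Real.sin_sq_add_cos_sq θ
    nlinarith [this]
  have e2 : ((1+t) * Real.cos θ')^2 + ((1+t) * Real.sin θ')^2 = (1+t)^2 := by
    have := Real.sin_sq_add_cos_sq θ'
    nlinarith [this]
  have hst : (1+s) = (1+t) := by
    rw [h1, h2, e2] at e1
    nlinarith [e1]
  have hcos : Real.cos θ = Real.cos θ' := by
    rw [hst] at h1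
    exact mul_left_cancel₀ (ne_of_gt hpt) h1
  have hπ := Real.pi_pos
  have hn' : (0:ℝ) < n := by exact_mod_cast Nat.lt_of_lt_of_le Nat.zero_lt_one hn
  have hbound : ∀ m : ℕ, m ≤ n → (m : ℝ) * Real.pi / n ∈ Set.Icc 0 Real.pi := by
    intro m hm
    constructor
    · positivity
    · rw [div_le_iff₀ hn']
      have : (m:ℝ) ≤ n := by exact_mod_cast hm
      nlinarith
  have heq : (i : ℝ) * Real.pi / n = (i' : ℝ) * Real.pi / n :=
    Real.injOn_cos (hbound i hi) (hbound i' hi') hcos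
  have : (i:ℝ) = i' := by
    field_simp at heq
    exact_mod_cast heq
  exact_mod_cast this

lemma cv_ne_zero {ℓ m : ℕ} (h : m ≠ 0) : cv ℓ m = NOdVert.node ℓ m := by
  simp [cv, h]

lemma nodAdj_symm {n : ℕ} {a b : NOdVert} (h : nodAdj n a b) : nodAdj n b a := by
  obtain ⟨ℓ, j, h1, h2, h3 | h3⟩ := h
  · exact ⟨ℓ, j, h1, h2, Or.inr h3⟩
  · exact ⟨ℓ, j, h1, h2, Or.inl h3⟩

lemma nodAdj_node {n : ℕ} {a : NOdVert} {ℓ j : ℕ} (hj : 1 ≤ j)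
    (h : nodAdj n a (NOdVert.node ℓ j)) : a = cv ℓ (j - 1) ∨ a = cv ℓ (j + 1) := by
  obtain ⟨ℓ', j', _, _, ⟨ha, hb⟩ | ⟨hb, ha⟩⟩ := h
  · rw [cv_ne_zero (Nat.succ_ne_zero j')] at hb
    injection hb with e1 e2
    subst e1
    left
    rw [ha]
    congr 1
    omega
  · by_cases hz : j' = 0
    · simp [cv, hz] at hb
    · rw [cv_ne_zero hz] at hb
      injection hb with e1 e2
      subst e1
      right
      rw [ha]
      congr 1
      omega
theorem stmt10 {V : Type*} (n : ℕ) (hn : 2 ≤ n) (G : SimpleGraph V)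
    (ω : V → ℝ × ℝ) (hω : IsPlacement n G ω)
    (f : V → NOdVert) (h1 : CondC1 n ω f) (h2 : CondC2 n G f)
    (ℓ j : ℕ) (hℓ1 : 1 ≤ ℓ) (hℓn : ℓ ≤ n) (hj : 2 ≤ j)
    (u v : ℕ → V) (k₁ k₂ : ℕ)
    (hu : IsWrapping n G ω u k₁) (hv : IsWrapping n G ω v k₂)
    (hu0 : f (u 0) = NOdVert.node ℓ j) (hv0 : f (v 0) = NOdVert.node ℓ j)
    (hu1 : f (u 1) = NOdVert.node ℓ (j - 1)) (hv1 : f (v 1) = NOdVert.node ℓ (j + 1))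
    (w : ℕ → V) (k : ℕ) (hw : IsWrapping n G ω w k)
    (p : ℕ) (hp : p ≤ k) (hfp : f (w p) = NOdVert.node ℓ j) :
    p = 0 := by
  obtain ⟨hk, hkd, hadj, hev, hod⟩ := hw
  obtain ⟨hk1, hk1d, huadj, huev, huod⟩ := hu
  obtain ⟨hk2, hk2d, hvadj, hvev, hvod⟩ := hv
  have hn1 : 1 ≤ n := by omega
  have hk1' : 2 * (n + 1) ≤ k₁ := Nat.le_of_dvd hk1 hk1d
  have hk2' : 2 * (n + 1) ≤ k₂ := Nat.le_of_dvd hk2 hk2d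
  have hk' : 2 * (n + 1) ≤ k := Nat.le_of_dvd hk hkd
  obtain ⟨t0, ht0, hu0ω⟩ := huev 0 (by omega)
  have hu0ω' : ω (u 0) = bpt n 0 t0 := by simpa using hu0ω
  have hrayj : ∀ x i s, f x = NOdVert.node ℓ j → i ≤ n → s ∈ Set.Icc (0:ℝ) 1 →
      ω x = bpt n i s → i = 0 := by
    intro x i s hfx hi hs hωx
    rcases h1 x (u 0) (by rw [hfx, hu0]) with ⟨hx, _⟩ | ⟨i₀, hi₀, s₀, hs₀, t₁, ht₁, hx, hy⟩
    · exact absurd (by rw [← hωx, hx]) (bpt_ne_origin hs.1)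
    · have e1 : i = i₀ := bpt_inj hn1 hi hi₀ hs.1 hs₀.1 (by rw [← hωx, hx])
      have e2 : i₀ = 0 := bpt_inj hn1 hi₀ (Nat.zero_le n) ht₁.1 ht0.1 (by rw [← hy, hu0ω'])
      omega
  by_contra hp0
  rcases Nat.even_or_odd p with he | ho
  · -- p even, p = 2*q with q > 0
    obtain ⟨q, hq⟩ := he
    have hq2 : p = 2 * q := by omega
    have hqpos : 0 < q := by omega
    obtain ⟨tp, htp, hωp⟩ := hev q (by omega)
    have hωp' : ω (w p) = bpt n (q % (n + 1)) tp := by rw [hq2]; exact hωp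
    have hq0 : q % (n + 1) = 0 :=
      hrayj (w p) _ tp hfp (Nat.lt_succ_iff.mp (Nat.mod_lt q (by omega))) htp hωp'
    have hdq := Nat.dvd_of_mod_eq_zero hq0
    have hqge : n + 1 ≤ q := Nat.le_of_dvd hqpos hdq
    have hmod : (q - 1) % (n + 1) = n := by
      obtain ⟨m, hm⟩ := hdq
      have hm1 : m ≠ 0 := by rintro rfl; omega
      have hmm : (n + 1) * m = (n + 1) * (m - 1) + (n + 1) := by
        conv_lhs => rw [show m = (m - 1) + 1 by omega]
        rw [Nat.mul_succ]
      have hq1 : q - 1 = (n + 1) * (m - 1) + n := by omega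
      rw [hq1, Nat.mul_add_mod]
      exact Nat.mod_eq_of_lt (by omega)
    obtain ⟨tq, htq, hωq⟩ := hev (q - 1) (by omega)
    have hωq' : ω (w (p - 2)) = bpt n n tq := by
      rw [hmod] at hωq
      rw [show p - 2 = 2 * (q - 1) by omega]
      exact hωq
    have ha1 : G.Adj (w (p - 1)) (w p) := by
      have := hadj (p - 1) (by omega)
      rwa [show p - 1 + 1 = p by omega] at this
    have ha2 : G.Adj (w (p - 2)) (w (p - 1)) := by
      have := hadj (p - 2) (by omega)
      rwa [show p - 2 + 1 = p - 1 by omega] at this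
    have hmidC := h2 _ _ ha1
    rw [hfp] at hmidC
    rcases nodAdj_node (by omega) hmidC with hmid | hmid
    · have hmid' : f (w (p - 1)) = NOdVert.node ℓ (j - 1) := by
        rw [hmid, cv_ne_zero (by omega)]
      have hlowC := h2 _ _ ha2
      rw [hmid'] at hlowC
      rcases nodAdj_node (by omega) hlowC with hlo | hhi
      · obtain ⟨t2, ht2, hu2ω⟩ := huev 1 (by omega)
        have hu2ω' : ω (u 2) = bpt n 1 t2 := by
          rw [show (1 : ℕ) % (n + 1) = 1 from Nat.mod_eq_of_lt (by omega)] at hu2ω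
          exact hu2ω
        have hu12 := h2 _ _ (huadj 1 (by omega))
        rw [hu1] at hu12
        rcases nodAdj_node (by omega) (nodAdj_symm hu12) with hu2 | hu2
        · have hfeq : f (u 2) = f (w (p - 2)) := by rw [hu2, hlo]
          rcases h1 (u 2) (w (p - 2)) hfeq with ⟨hx, _⟩ | ⟨i₀, hi₀, s₀, hs₀, t₁, ht₁, hx, hy⟩
          · exact absurd (by rw [← hu2ω', hx]) (bpt_ne_origin ht2.1)
          · have e1 : 1 = i₀ := bpt_inj hn1 (by omega) hi₀ ht2.1 hs₀.1 (by rw [← hu2ω', hx])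
            have e2 : i₀ = n := bpt_inj hn1 hi₀ le_rfl ht₁.1 htq.1 (by rw [← hy, hωq'])
            omega
        · have : (1 : ℕ) = 0 := hrayj (u 2) 1 t2
            (by rw [hu2, show j - 1 + 1 = j by omega, cv_ne_zero (by omega)])
            (by omega) ht2 hu2ω'
          omega
      · have : n = 0 := hrayj (w (p - 2)) n tq
          (by rw [hhi, show j - 1 + 1 = j by omega, cv_ne_zero (by omega)]) le_rfl htq hωq'
        omega
    · have hmid' : f (w (p - 1)) = NOdVert.node ℓ (j + 1) := by
        rw [hmid, cv_ne_zero (by omega)]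
      have hlowC := h2 _ _ ha2
      rw [hmid'] at hlowC
      rcases nodAdj_node (by omega) hlowC with hlo | hhi
      · have : n = 0 := hrayj (w (p - 2)) n tq
          (by rw [hlo, show j + 1 - 1 = j by omega, cv_ne_zero (by omega)]) le_rfl htq hωq'
        omega
      · obtain ⟨t2, ht2, hv2ω⟩ := hvev 1 (by omega)
        have hv2ω' : ω (v 2) = bpt n 1 t2 := by
          rw [show (1 : ℕ) % (n + 1) = 1 from Nat.mod_eq_of_lt (by omega)] at hv2ω
          exact hv2ω
        have hv12 := h2 _ _ (hvadj 1 (by omega))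
        rw [hv1] at hv12
        rcases nodAdj_node (by omega) (nodAdj_symm hv12) with hv2 | hv2
        · have : (1 : ℕ) = 0 := hrayj (v 2) 1 t2
            (by rw [hv2, show j + 1 - 1 = j by omega, cv_ne_zero (by omega)])
            (by omega) ht2 hv2ω'
          omega
        · have hfeq : f (v 2) = f (w (p - 2)) := by rw [hv2, hhi]
          rcases h1 (v 2) (w (p - 2)) hfeq with ⟨hx, _⟩ | ⟨i₀, hi₀, s₀, hs₀, t₁, ht₁, hx, hy⟩
          · exact absurd (by rw [← hv2ω', hx]) (bpt_ne_origin ht2.1)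
          · have e1 : 1 = i₀ := bpt_inj hn1 (by omega) hi₀ ht2.1 hs₀.1 (by rw [← hv2ω', hx])
            have e2 : i₀ = n := bpt_inj hn1 hi₀ le_rfl ht₁.1 htq.1 (by rw [← hy, hωq'])
            omega
  · -- p odd: ω (w p) = origin, contradiction with C1 against u 0
    obtain ⟨q, hq⟩ := ho
    have hωp : ω (w p) = origin := by rw [hq]; exact hod q (by omega)
    rcases h1 (w p) (u 0) (by rw [hfp, hu0]) with ⟨_, hy⟩ | ⟨i₀, hi₀, s₀, hs₀, _, _, hx, _⟩
    · exact absurd (by rw [← hu0ω', hy]) (bpt_ne_origin ht0.1)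
    · exact absurd (by rw [← hx, hωp]) (bpt_ne_origin hs₀.1)
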